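/- arXiv:0709.1500 — 3 statements merged into one kernel-verified Lean document; each statement's English description precedes it below -/
import Mathlib

section
/- Every subset S of ℤ^n has only finitely many minimal elements with respect to the partial order ⊑, where u ⊑ v means |u_i| ≤ |v_i| and u_i·v_i ≥ 0 for all i. -/
/-- The partial order `⊑` on `ℤ^n`: `u ⊑ v` iff `|u i| ≤ |v i|` and `u i * v i ≥ 0` for all `i`. -/
def sqle {n : Type*} (u v : n → ℤ) : Prop :=
  ∀ i, |u i| ≤ |v i| ∧ 0 ≤ u i * v i

lemma sqle_of_toNat {a b : ℤ} (h1 : a.toNat ≤ b.toNat) (h2 : (-a).toNat ≤ (-b).toNat) :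
    |a| ≤ |b| ∧ 0 ≤ a * b := by
  rcases lt_trichotomy a 0 with ha | ha | ha
  · have hb : b ≤ a := by omega
    refine ⟨?_, mul_nonneg_of_nonpos_of_nonpos ha.le (hb.trans ha.le)⟩
    rw [abs_of_neg ha, abs_of_neg (by omega)]
    omega
  · simp [ha]
  · have hb : a ≤ b := by omega
    rw [abs_of_pos ha, abs_of_pos (by omega)]
    exact ⟨hb, mul_nonneg ha.le (by omega : (0:ℤ) ≤ b)⟩

theorem finitely_many_minimal_elements (n : ℕ) (S : Set (Fin n → ℤ)) :
    {v ∈ S | ∀ u ∈ S, sqle u v → u = v}.Finite := by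
  set T := {v ∈ S | ∀ u ∈ S, sqle u v → u = v} with hT
  have hanti : IsAntichain sqle T := by
    intro a ha b hb hne hab
    exact hne (hb.2 a ha.1 hab)
  apply hanti.finite_of_partiallyWellOrderedOn
  intro f
  have hpwo : (Set.univ : Set ((Fin n → ℕ) × (Fin n → ℕ))).IsPWO := by
    have h1 : (Set.univ : Set (Fin n → ℕ)).IsPWO := Set.isPWO_of_wellQuasiOrderedLE _
    simpa [Set.univ_prod_univ] using h1.prod h1
  set g : (Fin n → ℤ) → ((Fin n → ℕ) × (Fin n → ℕ)) :=
    fun v => (fun i => (v i).toNat, fun i => (-v i).toNat) with hg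
  obtain ⟨i, j, hij, hle⟩ := hpwo (fun k => ⟨g (f k).1, Set.mem_univ _⟩)
  refine ⟨i, j, hij, fun k => ?_⟩
  exact sqle_of_toNat (hle.1 k) (hle.2 k)
end

section
/- For any integer matrix A (with rows indexed by a finite set), the Graver basis 𝒢(A), defined as the set of ⊑-minimal elements of {x ∈ ℤ^n : Ax = 0, x ≠ 0}, is finite. -/
/-- The Graver basis of an integer matrix `A`: the `⊑`-minimal elements of the set of
nonzero integer vectors in the kernel of `A`. -/
def graverBasis {R C : Type*} [Fintype R] [Fintype C] (A : Matrix R C ℤ) : Set (C → ℤ) :=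
  {x | A.mulVec x = 0 ∧ x ≠ 0 ∧ ∀ y : C → ℤ, A.mulVec y = 0 → y ≠ 0 → sqle y x → y = x}

/-- Embed a vector by its positive and negative parts. -/
def posNeg {n : ℕ} (x : Fin n → ℤ) : (Fin n ⊕ Fin n) → ℕ :=
  Sum.elim (fun i => (x i).toNat) (fun i => (-x i).toNat)

lemma posNeg_injective {n : ℕ} : Function.Injective (posNeg (n := n)) := by
  intro x y h
  funext i
  have h1 := congrFun h (Sum.inl i)
  have h2 := congrFun h (Sum.inr i)
  simp only [posNeg, Sum.elim_inl, Sum.elim_inr] at h1 h2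
  omega

lemma sqle_of_posNeg_le {n : ℕ} {x y : Fin n → ℤ} (h : posNeg x ≤ posNeg y) : sqle x y := by
  intro i
  have h1 := h (Sum.inl i)
  have h2 := h (Sum.inr i)
  simp only [posNeg, Sum.elim_inl, Sum.elim_inr] at h1 h2
  constructor
  · rcases abs_cases (x i) with ⟨hx, _⟩ | ⟨hx, _⟩ <;>
      rcases abs_cases (y i) with ⟨hy, _⟩ | ⟨hy, _⟩ <;> omega
  · rcases lt_trichotomy (x i) 0 with hx | hx | hx
    · have hy : y i < 0 := by omega
      exact le_of_lt (mul_pos_of_neg_of_neg hx hy)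
    · simp [hx]
    · have hy : 0 < y i := by omega
      exact le_of_lt (mul_pos hx hy)

theorem graverBasis_finite {R : Type*} [Fintype R] {n : ℕ} (A : Matrix R (Fin n) ℤ) :
    (graverBasis A).Finite := by
  have hpwo : Set.IsPWO (posNeg '' graverBasis A) := Set.isPWO_of_wellQuasiOrderedLE _
  have hanti : IsAntichain (· ≤ ·) (posNeg '' graverBasis A) := by
    rintro _ ⟨x, hx, rfl⟩ _ ⟨y, hy, rfl⟩ hne hle
    exact hne <| congrArg posNeg <| hy.2.2 x hx.1 hx.2.1 (sqle_of_posNeg_le hle)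
  have := hanti.finite_of_partiallyWellOrderedOn hpwo
  exact Set.Finite.of_finite_image this (posNeg_injective.injOn)
end

section
/- If x^1, …, x^k are circuits of A = (1,1,1)^{(m)} satisfying a primitive relation Σ_i h_i x^i = 0 (i.e., the h_i are relatively prime positive integers and no k−1 of the x^i satisfy a nontrivial linear relation), then the Graver complexity of A satisfies g(A) ≥ Σ_i h_i. -/
/-- A circuit of an integer matrix `A`: a nonzero integer kernel vector with
inclusion-minimal support whose nonzero entries are relatively prime. -/
def IsCircuit {R C : Type*} [Fintype R] [Fintype C] (A : Matrix R C ℤ) (x : C → ℤ) : Prop :=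
  A.mulVec x = 0 ∧ x ≠ 0 ∧
  (∀ y : C → ℤ, A.mulVec y = 0 → y ≠ 0 →
      Function.support y ⊆ Function.support x → Function.support y = Function.support x) ∧
  (∀ d : ℤ, (∀ i, d ∣ x i) → IsUnit d)

/-- The vertex-edge incidence matrix of the complete bipartite graph `K_{3,m}`,
with rows indexed by vertices `{a,b,c} ⊎ {u_1,…,u_m}` and columns by edges. -/
def incK3 (m : ℕ) : Matrix (Fin 3 ⊕ Fin m) (Fin 3 × Fin m) ℤ :=
  fun v e =>
    match v with
    | Sum.inl a => if a = e.1 then 1 else 0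
    | Sum.inr u => if u = e.2 then 1 else 0

/-- The `n`-fold product `A^{(n)} = (1_n ⊗ I_t) ⊕ (I_n ⊗ A)` of an integer matrix `A`. -/
def nfold {R C : Type*} [DecidableEq C] (A : Matrix R C ℤ) (n : ℕ) :
    Matrix (C ⊕ (Fin n × R)) (Fin n × C) ℤ :=
  fun r c =>
    match r with
    | Sum.inl j => if j = c.2 then 1 else 0
    | Sum.inr (i, r') => if i = c.1 then A r' c.2 else 0

/-- The type of `x ∈ ℤ^{n·t}`: the number of nonzero blocks of `x`. -/
noncomputable def blockType {n : ℕ} {C : Type*} (x : Fin n × C → ℤ) : ℕ :=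
  Nat.card {i : Fin n // ∃ j, x (i, j) ≠ 0}

/-- The Graver complexity of `A`: the supremum of the types of elements of the
Graver bases of all the `n`-fold products `A^{(n)}`, `n ≥ 1` (and `0` if all are empty). -/
noncomputable def graverComplexity {R C : Type*} [Fintype R] [Fintype C] [DecidableEq C]
    (A : Matrix R C ℤ) : ℕ∞ :=
  ⨆ (n : ℕ) (x ∈ graverBasis (nfold A (n + 1))), (blockType x : ℕ∞)

/-- A primitive relation `Σ hᵢ xᵢ = 0`: the coefficients are relatively prime positive
integers and no `k-1` of the vectors satisfy a nontrivial linear relation. -/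
def IsPrimitiveRel {k : ℕ} {V : Type*} [Fintype V] (h : Fin k → ℕ) (x : Fin k → V → ℤ) : Prop :=
  (∀ i, 0 < h i) ∧ (∀ d : ℕ, (∀ i, d ∣ h i) → d = 1) ∧
  (∑ i, (h i : ℤ) • x i = 0) ∧
  (∀ j : Fin k, LinearIndependent ℚ
      (fun i : {i : Fin k // i ≠ j} => fun e : V => (x i.1 e : ℚ)))

lemma int_eq_of_dvd_abs_le {a b : ℤ} (hd : a ∣ b) (hle : |b| ≤ |a|) (hsgn : 0 ≤ b * a)
    (hb : b ≠ 0) : b = a := by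
  obtain ⟨c, hc⟩ := hd
  have ha : a ≠ 0 := by rintro rfl; simp at hc; exact hb hc
  have hc1 : |c| ≤ 1 := by
    rw [hc, abs_mul] at hle
    have : 0 < |a| := abs_pos.mpr ha
    nlinarith [abs_nonneg c]
  have hc0 : c ≠ 0 := by rintro rfl; simp at hc; exact hb hc
  have : c = 1 ∨ c = -1 := by
    rcases abs_le.mp hc1 with ⟨h1, h2⟩; omega
  rcases this with rfl | rfl
  · rw [hc]; ring
  · exfalso
    rw [hc] at hsgn
    nlinarith [mul_self_pos.mpr ha]

lemma circuit_rigid {R C : Type*} [Fintype R] [Fintype C] {A : Matrix R C ℤ} {x y : C → ℤ}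
    (hx : IsCircuit A x) (hy0 : A.mulVec y = 0) (hyne : y ≠ 0) (hle : sqle y x) : y = x := by
  obtain ⟨hxk, hxne, hxsupp, hxcop⟩ := hx
  have hzero : ∀ i, x i = 0 → y i = 0 := by
    intro i hxi
    have := (hle i).1
    rw [hxi] at this
    simpa [abs_nonpos_iff] using this
  have hsub : Function.support y ⊆ Function.support x := by
    intro i hi
    simp only [Function.mem_support] at *
    exact fun hxi => hi (hzero i hxi)
  have hsupp := hxsupp y hy0 hyne hsub
  obtain ⟨e0, he0⟩ : ∃ e, y e ≠ 0 := Function.ne_iff.mp hyne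
  have hx0 : x e0 ≠ 0 := by
    rw [← Function.mem_support, ← hsupp, Function.mem_support]; exact he0
  have hz : ∀ i, y e0 * x i = x e0 * y i := by
    set zv : C → ℤ := fun i => y e0 * x i - x e0 * y i with hzv
    suffices hzz : zv = 0 by
      intro i
      have := congrFun hzz i
      simp only [hzv, Pi.zero_apply, sub_eq_zero] at this
      exact this
    by_contra hne
    have hzk : A.mulVec zv = 0 := by
      have hrw : zv = y e0 • x - x e0 • y := funext fun i => by simp [hzv, smul_eq_mul]
      rw [hrw, Matrix.mulVec_sub, Matrix.mulVec_smul, Matrix.mulVec_smul, hxk, hy0]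
      simp
    have hzsub : Function.support zv ⊆ Function.support x := by
      intro i hi
      simp only [Function.mem_support] at *
      intro hxi
      have : zv i = 0 := by
        show y e0 * x i - x e0 * y i = 0
        rw [hxi, hzero i hxi]; ring
      exact hi this
    have := hxsupp zv hzk hne hzsub
    have he0mem : e0 ∈ Function.support x := Function.mem_support.mpr hx0
    rw [← this, Function.mem_support] at he0mem
    exact he0mem (by simp [hzv, mul_comm])
  -- deduce x e0 ∣ y e0
  set g : ℕ := Int.gcd (x e0) (y e0) with hg
  have hgpos : 0 < g := Nat.pos_of_ne_zero (fun h0 => hx0 (Int.gcd_eq_zero_iff.mp h0).1)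
  set p : ℤ := x e0 / g with hp
  set q : ℤ := y e0 / g with hq
  have hgp : (g : ℤ) * p = x e0 := Int.mul_ediv_cancel' (Int.gcd_dvd_left _ _)
  have hgq : (g : ℤ) * q = y e0 := Int.mul_ediv_cancel' (Int.gcd_dvd_right _ _)
  have hcop : IsCoprime p q := Int.isCoprime_iff_gcd_eq_one.mpr (Int.gcd_div_gcd_div_gcd hgpos)
  have hpdvd : ∀ i, p ∣ x i := by
    intro i
    have h1 : (g : ℤ) * (q * x i) = (g : ℤ) * (p * y i) := by
      rw [← mul_assoc, ← mul_assoc, hgq, hgp]; exact hz i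
    have h2 : q * x i = p * y i :=
      mul_left_cancel₀ (by exact_mod_cast hgpos.ne') h1
    exact hcop.dvd_of_dvd_mul_left ⟨y i, h2⟩
  have hpu : IsUnit p := hxcop p hpdvd
  have hxdvdg : x e0 ∣ (g : ℤ) := by
    rcases Int.isUnit_iff.mp hpu with h1 | h1
    · exact ⟨1, by rw [← hgp, h1]; ring⟩
    · exact ⟨-1, by rw [← hgp, h1]; ring⟩
  have hdvd : x e0 ∣ y e0 := hxdvdg.trans (Int.gcd_dvd_right _ _)
  have hye : y e0 = x e0 := int_eq_of_dvd_abs_le hdvd (hle e0).1 (hle e0).2 he0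
  funext i
  have := hz i
  rw [hye] at this
  exact (mul_left_cancel₀ hx0 this.symm)

lemma indep_zero {k : ℕ} {V : Type*} [Fintype V] {h : Fin k → ℕ} {x : Fin k → V → ℤ}
    (hprim : IsPrimitiveRel h x) (j : Fin k) (g : Fin k → ℤ) (hgj : g j = 0)
    (hrel : ∑ i, g i • x i = 0) : ∀ i, g i = 0 := by
  classical
  have hli := hprim.2.2.2 j
  rw [Fintype.linearIndependent_iff] at hli
  have hsum : ∑ i : {i : Fin k // i ≠ j}, ((g i.1 : ℚ)) • (fun e : V => (x i.1 e : ℚ)) = 0 := by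
    funext e
    have h0 : ∑ i : Fin k, g i * x i e = 0 := by
      have := congrFun hrel e
      simpa [Finset.sum_apply, smul_eq_mul] using this
    have h1 : ∑ i : {i : Fin k // i ≠ j}, (g i.1 : ℚ) * (x i.1 e : ℚ)
        = ∑ i ∈ Finset.univ.erase j, (g i : ℚ) * (x i e : ℚ) :=
      (Finset.sum_subtype (p := fun i => i ≠ j) (Finset.univ.erase j)
        (by intro i; simp [Finset.mem_erase]) (fun i => (g i : ℚ) * (x i e : ℚ))).symm
    have h2 : ∑ i ∈ Finset.univ.erase j, (g i : ℚ) * (x i e : ℚ)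
        = ∑ i : Fin k, (g i : ℚ) * (x i e : ℚ) :=
      Finset.sum_erase _ (by rw [hgj]; simp)
    have h3 : ∑ i : Fin k, (g i : ℚ) * (x i e : ℚ) = 0 := by exact_mod_cast h0
    simp only [Finset.sum_apply, Pi.smul_apply, smul_eq_mul, Pi.zero_apply]
    rw [h1, h2, h3]
  have := hli (fun i => (g i.1 : ℚ)) hsum
  intro i
  by_cases hij : i = j
  · rw [hij]; exact hgj
  · have h4 : ((g i : ℚ)) = 0 := this ⟨i, hij⟩
    exact_mod_cast h4

lemma rel_rigid {k : ℕ} {V : Type*} [Fintype V] {h : Fin k → ℕ} {x : Fin k → V → ℤ}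
    (hprim : IsPrimitiveRel h x) (c : Fin k → ℕ) (hle : ∀ i, c i ≤ h i)
    (hrel : ∑ i, (c i : ℤ) • x i = 0) : c = 0 ∨ c = h := by
  classical
  rcases Nat.eq_zero_or_pos k with hk | hk
  · left; funext i; exact absurd i.2 (by omega)
  by_cases hc0 : ∃ j, c j = 0
  · left
    obtain ⟨j, hj⟩ := hc0
    have := indep_zero hprim j (fun i => (c i : ℤ)) (by show ((c j : ℤ)) = 0; exact_mod_cast hj) hrel
    funext i
    have h5 : ((c i : ℤ)) = 0 := this i
    simp only [Pi.zero_apply]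
    exact_mod_cast h5
  push_neg at hc0
  by_cases hch : ∃ j, c j = h j
  · right
    obtain ⟨j, hj⟩ := hch
    have hrel2 : ∑ i, ((h i : ℤ) - (c i : ℤ)) • x i = 0 := by
      simp only [sub_smul, Finset.sum_sub_distrib, hprim.2.2.1, hrel, sub_zero]
    have := indep_zero hprim j (fun i => (h i : ℤ) - (c i : ℤ))
      (by show ((h j : ℤ) - (c j : ℤ)) = 0; rw [hj]; ring) hrel2
    funext i
    have h6 : ((h i : ℤ)) - (c i : ℤ) = 0 := this i
    omega
  exfalso
  push_neg at hch
  have hlt : ∀ i, c i < h i := fun i => lt_of_le_of_ne (hle i) (hch i)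
  set j : Fin k := ⟨0, hk⟩ with hjdef
  set g : Fin k → ℤ := fun i => (h j : ℤ) * c i - (c j : ℤ) * h i with hgdef
  have hgj : g j = 0 := by simp [hgdef]; ring
  have hgrel : ∑ i, g i • x i = 0 := by
    have : ∀ i, g i • x i = (h j : ℤ) • ((c i : ℤ) • x i) - (c j : ℤ) • ((h i : ℤ) • x i) := by
      intro i; rw [← mul_smul, ← mul_smul, ← sub_smul]
    simp only [this, Finset.sum_sub_distrib, ← Finset.smul_sum, hrel, hprim.2.2.1,
      smul_zero, sub_zero]
  have hkey : ∀ i, h j * c i = c j * h i := by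
    intro i
    have := indep_zero hprim j g hgj hgrel i
    simp only [hgdef, sub_eq_zero] at this
    exact_mod_cast this
  set g0 : ℕ := Nat.gcd (h j) (c j) with hg0
  have hg0pos : 0 < g0 := Nat.gcd_pos_of_pos_left _ (hprim.1 j)
  set p : ℕ := h j / g0 with hpdef
  set q : ℕ := c j / g0 with hqdef
  have hgp : g0 * p = h j := Nat.mul_div_cancel' (Nat.gcd_dvd_left _ _)
  have hgq : g0 * q = c j := Nat.mul_div_cancel' (Nat.gcd_dvd_right _ _)
  have hcop : Nat.Coprime p q := Nat.coprime_div_gcd_div_gcd hg0pos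
  have hpdvd : ∀ i, p ∣ h i := by
    intro i
    have h1 : g0 * (p * c i) = g0 * (q * h i) := by
      rw [← mul_assoc, ← mul_assoc, hgp, hgq]; exact hkey i
    have h2 : p * c i = q * h i := Nat.eq_of_mul_eq_mul_left hg0pos h1
    exact hcop.dvd_of_dvd_mul_left ⟨c i, h2.symm⟩
  have hp1 : p = 1 := hprim.2.1 p hpdvd
  have hhg : h j = g0 := by rw [← hgp, hp1, mul_one]
  have hdj : h j ∣ c j := by rw [hhg]; exact Nat.gcd_dvd_right _ _
  have h7 := Nat.le_of_dvd (Nat.pos_of_ne_zero (hc0 j)) hdj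
  exact absurd (hlt j) (Nat.not_lt.mpr h7)

lemma nfold_mulVec_inl {R C : Type*} [Fintype R] [Fintype C] [DecidableEq C]
    (A : Matrix R C ℤ) (n : ℕ) (w : Fin n × C → ℤ) (j : C) :
    (nfold A n).mulVec w (Sum.inl j) = ∑ i : Fin n, w (i, j) := by
  classical
  simp [Matrix.mulVec, dotProduct, nfold, Fintype.sum_prod_type, ite_mul,
    Finset.sum_ite_eq, Finset.sum_ite_eq']

lemma nfold_mulVec_inr {R C : Type*} [Fintype R] [Fintype C] [DecidableEq C]
    (A : Matrix R C ℤ) (n : ℕ) (w : Fin n × C → ℤ) (i : Fin n) (r : R) :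
    (nfold A n).mulVec w (Sum.inr (i, r)) = A.mulVec (fun j => w (i, j)) r := by
  classical
  simp [Matrix.mulVec, dotProduct, nfold, Fintype.sum_prod_type_right, ite_mul,
    Finset.sum_ite_eq, Finset.sum_ite_eq']

lemma sum_fiber {k n : ℕ} {h : Fin k → ℕ} (eqv : (Σ i : Fin k, Fin (h i)) ≃ Fin n)
    {M : Type*} [AddCommMonoid M] (f : Fin n → M) :
    ∑ j : Fin n, f j = ∑ i : Fin k, ∑ b : Fin (h i), f (eqv ⟨i, b⟩) := by
  rw [← Equiv.sum_comp eqv f, ← Finset.univ_sigma_univ, Finset.sum_sigma]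

/-- If circuits of the incidence matrix of `K_{3,m}` satisfy a primitive relation
`Σ hᵢ xᵢ = 0`, then the Graver complexity of `K_{3,m}` is at least `Σ hᵢ`. -/
theorem graverComplexity_ge_of_primitive_relation {m k : ℕ}
    (x : Fin k → (Fin 3 × Fin m) → ℤ) (h : Fin k → ℕ)
    (hcirc : ∀ i, IsCircuit (incK3 m) (x i))
    (hprim : IsPrimitiveRel h x) :
    ((∑ i, h i : ℕ) : ℕ∞) ≤ graverComplexity (incK3 m) := by
  classical
  rcases Nat.eq_zero_or_pos k with hk | hk
  · subst hk; simp
  obtain ⟨n, hn⟩ : ∃ n : ℕ, ∑ i, h i = n + 1 := by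
    have : 0 < ∑ i, h i :=
      Finset.sum_pos (fun i _ => hprim.1 i) ⟨⟨0, hk⟩, Finset.mem_univ _⟩
    exact ⟨(∑ i, h i) - 1, by omega⟩
  have hcard : Fintype.card (Σ i : Fin k, Fin (h i)) = n + 1 := by
    rw [Fintype.card_sigma]
    simp only [Fintype.card_fin]
    exact hn
  set eqv := Fintype.equivFinOfCardEq hcard with heqv
  set φ : Fin (n + 1) → Fin k := fun j => (eqv.symm j).1 with hφ
  set z : Fin (n + 1) × (Fin 3 × Fin m) → ℤ := fun p => x (φ p.1) p.2 with hzdef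
  have hzfib : ∀ (i : Fin k) (b : Fin (h i)) (e : Fin 3 × Fin m),
      z (eqv ⟨i, b⟩, e) = x i e := by
    intro i b e
    show x (eqv.symm (eqv ⟨i, b⟩)).1 e = x i e
    rw [Equiv.symm_apply_apply]
  have hblocksum : ∀ e : Fin 3 × Fin m, ∑ j : Fin (n + 1), z (j, e) = 0 := by
    intro e
    rw [sum_fiber eqv]
    calc ∑ i, ∑ b : Fin (h i), z (eqv ⟨i, b⟩, e) = ∑ i, (h i : ℤ) * x i e := by
          refine Finset.sum_congr rfl fun i _ => ?_
          simp [hzfib i _ e, Finset.sum_const, nsmul_eq_mul]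
      _ = 0 := by
          have := congrFun hprim.2.2.1 e
          simpa [Finset.sum_apply, smul_eq_mul] using this
  have hker : (nfold (incK3 m) (n + 1)).mulVec z = 0 := by
    funext r
    rcases r with j | ⟨i, r'⟩
    · rw [nfold_mulVec_inl]
      exact hblocksum j
    · rw [nfold_mulVec_inr]
      have hb : (fun e => z (i, e)) = x (φ i) := rfl
      rw [hb]
      exact congrFun (hcirc (φ i)).1 r'
  have hzne : z ≠ 0 := by
    obtain ⟨e, he⟩ := Function.ne_iff.mp (hcirc (φ 0)).2.1
    exact Function.ne_iff.mpr ⟨(0, e), he⟩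
  have hmin : ∀ y : Fin (n + 1) × (Fin 3 × Fin m) → ℤ,
      (nfold (incK3 m) (n + 1)).mulVec y = 0 → y ≠ 0 → sqle y z → y = z := by
    intro y hy hyne hyle
    have hysum : ∀ e, ∑ j : Fin (n + 1), y (j, e) = 0 := by
      intro e
      have := congrFun hy (Sum.inl e)
      rw [nfold_mulVec_inl] at this
      exact this
    have hyker : ∀ j : Fin (n + 1), (incK3 m).mulVec (fun e => y (j, e)) = 0 := by
      intro j
      funext r'
      have := congrFun hy (Sum.inr (j, r'))
      rw [nfold_mulVec_inr] at this
      exact this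
    have hblock : ∀ j : Fin (n + 1),
        (fun e => y (j, e)) = 0 ∨ (fun e => y (j, e)) = x (φ j) := by
      intro j
      by_cases h0 : (fun e => y (j, e)) = 0
      · exact Or.inl h0
      · exact Or.inr (circuit_rigid (hcirc (φ j)) (hyker j) h0 (fun e => hyle (j, e)))
    set c : Fin k → ℕ := fun i =>
      (Finset.univ.filter (fun b : Fin (h i) => (fun e => y (eqv ⟨i, b⟩, e)) ≠ 0)).card
      with hcdef
    have hcle : ∀ i, c i ≤ h i := by
      intro i
      calc c i ≤ (Finset.univ : Finset (Fin (h i))).card := Finset.card_filter_le _ _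
        _ = h i := by simp
    have hcrel : ∑ i, (c i : ℤ) • x i = 0 := by
      funext e
      simp only [Finset.sum_apply, Pi.smul_apply, smul_eq_mul, Pi.zero_apply]
      have h0 := hysum e
      rw [sum_fiber eqv] at h0
      rw [← h0]
      refine Finset.sum_congr rfl fun i _ => ?_
      have hterm : ∀ b : Fin (h i), y (eqv ⟨i, b⟩, e)
          = if (fun e => y (eqv ⟨i, b⟩, e)) ≠ 0 then x i e else 0 := by
        intro b
        rcases hblock (eqv ⟨i, b⟩) with hb | hb
        · rw [if_neg (by simpa using hb)]
          exact congrFun hb e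
        · have hφi : φ (eqv ⟨i, b⟩) = i := by
            show (eqv.symm (eqv ⟨i, b⟩)).1 = i
            rw [Equiv.symm_apply_apply]
          rw [hφi] at hb
          rw [if_pos (by rw [hb]; exact (hcirc i).2.1)]
          exact congrFun hb e
      rw [Finset.sum_congr rfl (fun b _ => hterm b), ← Finset.sum_filter, Finset.sum_const]
      simp [nsmul_eq_mul, mul_comm, hcdef]
    rcases rel_rigid hprim c hcle hcrel with h0 | h0
    · exfalso
      apply hyne
      funext p
      obtain ⟨j, e⟩ := p
      have hcz : c (eqv.symm j).1 = 0 := congrFun h0 _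
      rw [hcdef] at hcz
      have hfe := Finset.card_eq_zero.mp hcz
      rw [Finset.filter_eq_empty_iff] at hfe
      have hb0 : ¬ (fun e => y (eqv ⟨(eqv.symm j).1, (eqv.symm j).2⟩, e)) ≠ 0 :=
        hfe (Finset.mem_univ (eqv.symm j).2)
      rw [not_ne_iff] at hb0
      simp only [Sigma.eta, Equiv.apply_symm_apply] at hb0
      exact congrFun hb0 e
    · funext p
      obtain ⟨j, e⟩ := p
      have hch : c (eqv.symm j).1 = h (eqv.symm j).1 := congrFun h0 _
      rw [hcdef] at hch
      have hfu : (Finset.univ.filter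
          (fun b : Fin (h (eqv.symm j).1) =>
            (fun e => y (eqv ⟨(eqv.symm j).1, b⟩, e)) ≠ 0)) = Finset.univ :=
        Finset.eq_univ_of_card _ (by simpa using hch)
      have hmem := Finset.mem_filter.mp
        (hfu ▸ Finset.mem_univ (eqv.symm j).2)
      have hbne : (fun e => y (eqv ⟨(eqv.symm j).1, (eqv.symm j).2⟩, e)) ≠ 0 := hmem.2
      simp only [Sigma.eta, Equiv.apply_symm_apply] at hbne
      rcases hblock j with hb | hb
      · exact absurd hb hbne
      · exact congrFun hb e
  have hbt : blockType z = n + 1 := by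
    have hall : ∀ i : Fin (n + 1), ∃ e, z (i, e) ≠ 0 := by
      intro i
      exact Function.ne_iff.mp (hcirc (φ i)).2.1
    rw [blockType, Nat.card_congr (Equiv.subtypeUnivEquiv hall)]
    simp
  have hmemG : z ∈ graverBasis (nfold (incK3 m) (n + 1)) := ⟨hker, hzne, hmin⟩
  refine le_trans ?_ (le_iSup_of_le n (le_iSup_of_le z (le_iSup_of_le hmemG le_rfl)))
  rw [hbt, hn]
end
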